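/- Let E be a finite set ('edges') with distinct positive appearance times t : E → ℝ, and let A_i denote the set of the i earliest edges (so A_0 = ∅). For any subset A ⊆ E with A ≠ E, the alternating sum Σ_{B ⊆ A} (-1)^{|A−B|} · min{t(e) : e ∉ B} equals t_{i+1} − t_i if A = A_i for some i (where t_0 = 0 and t_1 < t_2 < ⋯ are the sorted times), and equals 0 otherwise. -/

import Mathlib

open Finset

variable {E : Type*} [Fintype E] [DecidableEq E]

/-- The set of the `i` earliest edges: those `e` such that at most `i`
edges (including `e` itself) have appearance time `≤ t e`. -/
noncomputable def earliest (t : E → ℝ) (i : ℕ) : Finset E :=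
  Finset.univ.filter fun e =>
    (Finset.univ.filter fun e' => t e' ≤ t e).card ≤ i

/-- The sorted appearance times: `tval t 0 = 0` and `tval t (i+1)` is the
minimal time of an edge outside the set of the `i` earliest edges. -/
noncomputable def tval (t : E → ℝ) : ℕ → ℝ
  | 0 => 0
  | i + 1 => sInf (t '' {e | e ∉ earliest t i})

/-- The rank of an edge. -/
noncomputable def rk (t : E → ℝ) (e : E) : ℕ :=
  (Finset.univ.filter fun e' => t e' ≤ t e).card

lemma mem_earliest (t : E → ℝ) {i : ℕ} {e : E} : e ∈ earliest t i ↔ rk t e ≤ i := by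
  simp [earliest, rk]

lemma rk_le_rk (t : E → ℝ) {e e' : E} (h : t e ≤ t e') : rk t e ≤ rk t e' :=
  card_le_card (monotone_filter_right _ (fun x _ hx => le_trans hx h))

lemma rk_lt_rk (t : E → ℝ) {e e' : E} (h : t e < t e') : rk t e < rk t e' := by
  apply card_lt_card
  constructor
  · exact monotone_filter_right _ (fun x _ hx => le_trans hx h.le)
  · intro hsub
    have := hsub (by simp : e' ∈ Finset.univ.filter fun x => t x ≤ t e')
    simp at this
    exact absurd (lt_of_le_of_lt this h) (lt_irrefl _)

lemma rk_le_rk_iff (t : E → ℝ) {e e' : E} : rk t e ≤ rk t e' ↔ t e ≤ t e' := by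
  constructor
  · intro h
    by_contra hc
    exact absurd (rk_lt_rk t (lt_of_not_ge hc)) (by omega)
  · exact rk_le_rk t

lemma rk_injective (t : E → ℝ) (ht : Function.Injective t) :
    Function.Injective (rk t) := by
  intro e e' h
  apply ht
  exact le_antisymm ((rk_le_rk_iff t).mp h.le) ((rk_le_rk_iff t).mp h.ge)

lemma one_le_rk (t : E → ℝ) (e : E) : 1 ≤ rk t e := by
  rw [Nat.one_le_iff_ne_zero, ← Nat.pos_iff_ne_zero]
  exact card_pos.mpr ⟨e, by simp⟩

lemma rk_le_n (t : E → ℝ) (e : E) : rk t e ≤ Fintype.card E := by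
  simpa [rk] using card_filter_le Finset.univ (fun e' => t e' ≤ t e)

lemma rk_image (t : E → ℝ) (ht : Function.Injective t) :
    Finset.univ.image (rk t) = Finset.Icc 1 (Fintype.card E) := by
  apply Finset.eq_of_subset_of_card_le
  · intro j hj
    simp only [mem_image] at hj
    obtain ⟨e, _, rfl⟩ := hj
    exact Finset.mem_Icc.mpr ⟨one_le_rk t e, rk_le_n t e⟩
  · rw [Nat.card_Icc, card_image_of_injective _ (rk_injective t ht), card_univ]
    omega

lemma exists_rk (t : E → ℝ) (ht : Function.Injective t) {j : ℕ} (h1 : 1 ≤ j)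
    (h2 : j ≤ Fintype.card E) : ∃ e, rk t e = j := by
  have : j ∈ Finset.univ.image (rk t) := by
    rw [rk_image t ht]; exact Finset.mem_Icc.mpr ⟨h1, h2⟩
  simpa using this

lemma card_earliest (t : E → ℝ) (ht : Function.Injective t) {i : ℕ}
    (hi : i ≤ Fintype.card E) : (earliest t i).card = i := by
  have he : earliest t i = Finset.univ.filter fun e => rk t e ≤ i := rfl
  rw [he, ← card_image_of_injective _ (rk_injective t ht),
    ← Finset.filter_image (p := fun j => j ≤ i), rk_image t ht]
  have : (Finset.Icc 1 (Fintype.card E)).filter (fun j => j ≤ i) = Finset.Icc 1 i := by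
    ext j
    simp only [mem_filter, Finset.mem_Icc]
    omega
  rw [this, Nat.card_Icc]
  omega

lemma earliest_mono (t : E → ℝ) {i j : ℕ} (h : i ≤ j) : earliest t i ⊆ earliest t j := by
  intro e he
  rw [mem_earliest] at he ⊢
  omega

lemma earliest_zero (t : E → ℝ) : earliest t 0 = ∅ := by
  ext e
  simp only [mem_earliest, Finset.notMem_empty, iff_false]
  have := one_le_rk t e
  omega

lemma earliest_univ (t : E → ℝ) : earliest t (Fintype.card E) = Finset.univ := by
  ext e
  simp [mem_earliest, rk_le_n t e]

lemma earliest_succ (t : E → ℝ) (ht : Function.Injective t) {i : ℕ} {es : E}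
    (he : rk t es = i + 1) : earliest t (i + 1) = insert es (earliest t i) := by
  ext e
  simp only [mem_earliest, Finset.mem_insert]
  constructor
  · intro h
    rcases Nat.lt_or_ge (rk t e) (i + 1) with h' | h'
    · right; omega
    · left; exact rk_injective t ht (by omega)
  · rintro (rfl | h)
    · omega
    · omega

lemma tval_succ (t : E → ℝ) {i : ℕ} {es : E} (he : rk t es = i + 1) :
    tval t (i + 1) = t es := by
  show sInf (t '' {e | e ∉ earliest t i}) = t es
  have hmem : t es ∈ t '' {e | e ∉ earliest t i} := by
    refine ⟨es, ?_, rfl⟩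
    simp only [Set.mem_setOf_eq, mem_earliest]
    omega
  have hfin : (t '' {e | e ∉ earliest t i}).Finite := Set.Finite.image _ (Set.toFinite _)
  apply le_antisymm
  · exact csInf_le hfin.bddBelow hmem
  · apply le_csInf ⟨_, hmem⟩
    rintro x ⟨e, he', rfl⟩
    simp only [Set.mem_setOf_eq, mem_earliest] at he'
    exact (rk_le_rk_iff t).mp (by omega)

lemma sInf_decomp (t : E → ℝ) (ht : Function.Injective t) [Nonempty E]
    (B : Finset E) (hB : B ≠ Finset.univ) :
    sInf (t '' {e | e ∉ B}) =
      ∑ i ∈ Finset.range (Fintype.card E),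
        (if earliest t i ⊆ B then tval t (i + 1) - tval t i else 0) := by
  set n := Fintype.card E with hn
  have hex : ∃ i, ¬ earliest t i ⊆ B := by
    refine ⟨n, ?_⟩
    rw [earliest_univ t]
    intro h
    exact hB (Finset.univ_subset_iff.mp h)
  set m := Nat.find hex with hm
  have hspec : ¬ earliest t m ⊆ B := Nat.find_spec hex
  have hm1 : 1 ≤ m := by
    rcases Nat.eq_zero_or_pos m with h0 | h
    · exfalso; apply hspec; rw [h0, earliest_zero t]; exact Finset.empty_subset _
    · exact h
  have hmn : m ≤ n := Nat.find_le (by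
    rw [earliest_univ t]
    intro h
    exact hB (Finset.univ_subset_iff.mp h))
  set k := m - 1 with hk
  have hkm : k + 1 = m := by omega
  have hPk : earliest t k ⊆ B := by
    by_contra hc
    have h2 : m ≤ k := Nat.find_le hc
    omega
  have hkn : k < n := by omega
  -- RHS equals telescoping sum
  have hfilter : (Finset.range n).filter (fun i => earliest t i ⊆ B) = Finset.range (k + 1) := by
    ext i
    simp only [mem_filter, Finset.mem_range]
    constructor
    · rintro ⟨hi, hsub⟩
      by_contra hc
      have : earliest t (k + 1) ⊆ B := (earliest_mono t (by omega)).trans hsub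
      rw [hkm] at this
      exact hspec this
    · intro hi
      exact ⟨by omega, (earliest_mono t (by omega)).trans hPk⟩
  rw [← Finset.sum_filter, hfilter, Finset.sum_range_sub (fun i => tval t i)]
  show sInf (t '' {e | e ∉ B}) = tval t (k + 1) - tval t 0
  rw [show tval t 0 = 0 from rfl, sub_zero]
  obtain ⟨es, hes⟩ := exists_rk t ht (by omega : 1 ≤ k + 1) (by omega)
  rw [tval_succ t hes]
  have hesB : es ∉ B := by
    intro hc
    apply hspec
    rw [← hkm, earliest_succ t ht hes]
    exact Finset.insert_subset hc hPk
  have hmem : t es ∈ t '' {e | e ∉ B} := ⟨es, hesB, rfl⟩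
  have hfin : (t '' {e | e ∉ B}).Finite := Set.Finite.image _ (Set.toFinite _)
  apply le_antisymm
  · exact csInf_le hfin.bddBelow hmem
  · apply le_csInf ⟨_, hmem⟩
    rintro x ⟨e, he', rfl⟩
    simp only [Set.mem_setOf_eq] at he'
    have : e ∉ earliest t k := fun hc => he' (hPk hc)
    rw [mem_earliest] at this
    exact (rk_le_rk_iff t).mp (by omega)

lemma neg_one_sum (D : Finset E) :
    ∑ C ∈ D.powerset, ((-1 : ℝ)) ^ (D.card - C.card) = if D = ∅ then 1 else 0 := by
  have h1 : ∀ C ∈ D.powerset, ((-1 : ℝ)) ^ (D.card - C.card) =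
      (-1) ^ D.card * (-1) ^ C.card := by
    intro C hC
    have h := card_le_card (Finset.mem_powerset.mp hC)
    have h2 : D.card + C.card = (D.card - C.card) + 2 * C.card := by omega
    calc ((-1 : ℝ)) ^ (D.card - C.card)
        = (-1) ^ (D.card - C.card) * ((-1) ^ 2) ^ C.card := by norm_num
      _ = (-1) ^ ((D.card - C.card) + 2 * C.card) := by rw [pow_add, pow_mul]
      _ = (-1) ^ (D.card + C.card) := by rw [← h2]
      _ = (-1) ^ D.card * (-1) ^ C.card := by rw [pow_add]
  rw [Finset.sum_congr rfl h1, ← Finset.mul_sum]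
  have h2 : ∑ C ∈ D.powerset, ((-1 : ℝ)) ^ C.card =
      ((∑ C ∈ D.powerset, ((-1 : ℤ)) ^ C.card : ℤ) : ℝ) := by push_cast; rfl
  rw [h2, Finset.sum_powerset_neg_one_pow_card]
  by_cases hD : D = ∅
  · simp [hD]
  · simp [hD]

lemma ind_sum (S A : Finset E) :
    ∑ B ∈ A.powerset, (if S ⊆ B then ((-1 : ℝ)) ^ (A.card - B.card) else 0) =
      if A = S then 1 else 0 := by
  by_cases hSA : S ⊆ A
  · rw [← Finset.sum_filter]
    have key : ∑ B ∈ A.powerset.filter (fun B => S ⊆ B), ((-1 : ℝ)) ^ (A.card - B.card) =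
        ∑ C ∈ (A \ S).powerset, ((-1 : ℝ)) ^ ((A \ S).card - C.card) := by
      apply Finset.sum_nbij' (fun B => B \ S) (fun C => C ∪ S)
      · intro B hB
        simp only [mem_filter, Finset.mem_powerset] at hB
        exact Finset.mem_powerset.mpr (Finset.sdiff_subset_sdiff hB.1 (le_refl _))
      · intro C hC
        rw [Finset.mem_powerset] at hC
        simp only [mem_filter, Finset.mem_powerset]
        exact ⟨Finset.union_subset (hC.trans (Finset.sdiff_subset)) hSA,
          Finset.subset_union_right⟩
      · intro B hB
        simp only [mem_filter, Finset.mem_powerset] at hB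
        exact Finset.sdiff_union_of_subset hB.2
      · intro C hC
        rw [Finset.mem_powerset] at hC
        exact Finset.union_sdiff_cancel_right
          (Finset.disjoint_left.mpr fun x hx => (Finset.mem_sdiff.mp (hC hx)).2)
      · intro B hB
        simp only [mem_filter, Finset.mem_powerset] at hB
        congr 1
        have h1 := card_le_card hB.1
        have h2 := card_le_card hB.2
        rw [Finset.card_sdiff_of_subset hSA, Finset.card_sdiff_of_subset hB.2]
        omega
    rw [key, neg_one_sum]
    have hiff : A \ S = ∅ ↔ A = S := by
      rw [Finset.sdiff_eq_empty_iff_subset]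
      exact ⟨fun h => le_antisymm h hSA, fun h => by rw [h]⟩
    by_cases h : A = S
    · rw [if_pos (hiff.mpr h), if_pos h]
    · rw [if_neg (fun hc => h (hiff.mp hc)), if_neg h]
  · rw [Finset.sum_eq_zero, if_neg (fun h => hSA (le_of_eq h.symm))]
    intro B hB
    rw [Finset.mem_powerset] at hB
    exact if_neg (fun h => hSA (h.trans hB))

theorem stmt8 [Nonempty E] (t : E → ℝ) (ht : Function.Injective t)
    (htpos : ∀ e, 0 < t e) (A : Finset E) (hA : A ≠ Finset.univ) :
    ∑ B ∈ A.powerset, (-1 : ℝ) ^ (A.card - B.card) * sInf (t '' {e | e ∉ B}) =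
      if A = earliest t A.card then tval t (A.card + 1) - tval t A.card
      else 0 := by
  set n := Fintype.card E with hn
  have hcardA : A.card < n := by
    rw [hn, ← card_univ]
    exact card_lt_card (Finset.ssubset_univ_iff.mpr hA)
  have step1 : ∀ B ∈ A.powerset, (-1 : ℝ) ^ (A.card - B.card) * sInf (t '' {e | e ∉ B}) =
      ∑ i ∈ Finset.range n,
        (if earliest t i ⊆ B then ((-1 : ℝ)) ^ (A.card - B.card) else 0) *
          (tval t (i + 1) - tval t i) := by
    intro B hB
    rw [Finset.mem_powerset] at hB
    have hBu : B ≠ Finset.univ := fun h =>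
      hA (Finset.univ_subset_iff.mp (h ▸ hB))
    rw [sInf_decomp t ht B hBu, Finset.mul_sum]
    apply Finset.sum_congr rfl
    intro i _
    by_cases h : earliest t i ⊆ B <;> simp [h]
  rw [Finset.sum_congr rfl step1, Finset.sum_comm]
  have step2 : ∀ i ∈ Finset.range n,
      (∑ B ∈ A.powerset,
        (if earliest t i ⊆ B then ((-1 : ℝ)) ^ (A.card - B.card) else 0) *
          (tval t (i + 1) - tval t i)) =
      (if A = earliest t i then 1 else 0) * (tval t (i + 1) - tval t i) := by
    intro i _
    rw [← Finset.sum_mul, ind_sum]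
  rw [Finset.sum_congr rfl step2]
  rw [Finset.sum_eq_single_of_mem A.card (Finset.mem_range.mpr hcardA)]
  · by_cases h : A = earliest t A.card
    · rw [if_pos h, if_pos h, one_mul]
    · rw [if_neg h, if_neg h, zero_mul]
  · intro i hi hne
    rw [Finset.mem_range] at hi
    have hne2 : A ≠ earliest t i := by
      intro h
      apply hne
      have hc := card_earliest t ht (le_of_lt hi)
      rw [← h] at hc
      omega
    rw [if_neg hne2, zero_mul]
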